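/- arXiv:math/0603353 — 2 statements merged into one kernel-verified Lean document; each statement's English description precedes it below -/
import Mathlib

section
/- Let ρ and ρ' be configurations on (I,J) such that ρ ≠ ρ', ρ ⊀ ρ', ρ' ⊀ ρ, and such that for every block B of ρ and every block B' of ρ' one has B ⊆ B', or B' ⊆ B, or B ∩ B' = ∅. Let ρ̃ be the set of those members of ρ ∪ ρ' that are maximal with respect to inclusion. Then ρ̃ is a configuration on (I,J), ρ̃ ≺ ρ, and ρ̃ ≺ ρ'. -/
/-- A configuration on the pair of disjoint finite sets `(I, J)`: a nonempty finite
collection of blocks, each a subset of `I ∪ J` with at least 2 elements and at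
least one element of `I`, the blocks being pairwise disjoint. -/
def IsConfig {α : Type*} [DecidableEq α] (I J : Finset α) (ρ : Finset (Finset α)) : Prop :=
  ρ.Nonempty ∧ (∀ B ∈ ρ, B ⊆ I ∪ J) ∧
    (∀ B ∈ ρ, ∀ B' ∈ ρ, B ≠ B' → Disjoint B B') ∧
    (∀ B ∈ ρ, 2 ≤ B.card) ∧ (∀ B ∈ ρ, (B ∩ I).Nonempty)

/-- `ConfigLT ρ' ρ` means `ρ' ≺ ρ`: the configurations differ and every block of
`ρ` is contained in some block of `ρ'`. -/
def ConfigLT {α : Type*} (ρ' ρ : Finset (Finset α)) : Prop :=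
  ρ' ≠ ρ ∧ ∀ B ∈ ρ, ∃ B' ∈ ρ', B ⊆ B'

/-- if `ρ` and `ρ'` are distinct `≺`-incomparable configurations whose
blocks are pairwise nested or disjoint, then the collection `ρ̃` of the members of
`ρ ∪ ρ'` that are maximal with respect to inclusion is a configuration with
`ρ̃ ≺ ρ` and `ρ̃ ≺ ρ'`. -/
theorem stmt_3 {α : Type*} [DecidableEq α] (I J : Finset α)
    (hIJ : Disjoint I J) (hI : I.Nonempty)
    (ρ ρ' ρt : Finset (Finset α))
    (hρ : IsConfig I J ρ) (hρ' : IsConfig I J ρ')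
    (hne : ρ ≠ ρ') (h1 : ¬ ConfigLT ρ ρ') (h2 : ¬ ConfigLT ρ' ρ)
    (hnest : ∀ B ∈ ρ, ∀ B' ∈ ρ', B ⊆ B' ∨ B' ⊆ B ∨ Disjoint B B')
    (hρt : ∀ B, B ∈ ρt ↔ B ∈ ρ ∪ ρ' ∧ ∀ C ∈ ρ ∪ ρ', B ⊆ C → B = C) :
    IsConfig I J ρt ∧ ConfigLT ρt ρ ∧ ConfigLT ρt ρ' := by
  obtain ⟨hρne, hρsub, hρdisj, hρcard, hρI⟩ := hρ
  obtain ⟨hρ'ne, hρ'sub, hρ'disj, hρ'card, hρ'I⟩ := hρ'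
  classical
  -- every element of ρ ∪ ρ' is contained in some member of ρt
  have key : ∀ B ∈ ρ ∪ ρ', ∃ C ∈ ρt, B ⊆ C := by
    intro B hB
    obtain ⟨a, ha, hmax⟩ : ∃ a ∈ (ρ ∪ ρ').filter (fun C => B ⊆ C),
        ∀ x ∈ (ρ ∪ ρ').filter (fun C => B ⊆ C), ¬ a < x := by
      obtain ⟨a, ha⟩ := Finset.exists_maximal (s := (ρ ∪ ρ').filter (fun C => B ⊆ C))
        ⟨B, Finset.mem_filter.mpr ⟨hB, subset_rfl⟩⟩
      exact ⟨a, ha.1, fun x hx hlt => (lt_iff_le_not_ge.mp hlt).2 (ha.2 hx hlt.le)⟩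
    rw [Finset.mem_filter] at ha
    refine ⟨a, (hρt a).mpr ⟨ha.1, ?_⟩, ha.2⟩
    intro C hC haC
    by_contra hne'
    exact hmax C (Finset.mem_filter.mpr ⟨hC, ha.2.trans haC⟩)
      (lt_of_le_of_ne haC hne')
  have hmem : ∀ B ∈ ρt, B ∈ ρ ∪ ρ' := fun B hB => ((hρt B).mp hB).1
  have hmaxt : ∀ B ∈ ρt, ∀ C ∈ ρ ∪ ρ', B ⊆ C → B = C :=
    fun B hB => ((hρt B).mp hB).2
  -- ρt is nonempty
  have htne : ρt.Nonempty := by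
    obtain ⟨B, hB⟩ := hρne
    obtain ⟨C, hC, -⟩ := key B (Finset.mem_union_left _ hB)
    exact ⟨C, hC⟩
  have hcases : ∀ B ∈ ρt, B ∈ ρ ∨ B ∈ ρ' := by
    intro B hB
    exact Finset.mem_union.mp (hmem B hB)
  refine ⟨⟨htne, ?_, ?_, ?_, ?_⟩, ⟨?_, ?_⟩, ⟨?_, ?_⟩⟩
  · intro B hB
    rcases hcases B hB with h | h
    · exact hρsub B h
    · exact hρ'sub B h
  · intro B hB B' hB' hBB'
    rcases hcases B hB with h | h <;> rcases hcases B' hB' with h' | h'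
    · exact hρdisj B h B' h' hBB'
    · rcases hnest B h B' h' with hs | hs | hd
      · exact absurd (hmaxt B hB B' (Finset.mem_union_right _ h') hs) hBB'
      · exact absurd (hmaxt B' hB' B (Finset.mem_union_left _ h) hs).symm hBB'
      · exact hd
    · rcases hnest B' h' B h with hs | hs | hd
      · exact absurd (hmaxt B' hB' B (Finset.mem_union_right _ h) hs).symm hBB'
      · exact absurd (hmaxt B hB B' (Finset.mem_union_left _ h') hs) hBB'
      · exact hd.symm
    · exact hρ'disj B h B' h' hBB'
  · intro B hB
    rcases hcases B hB with h | h
    · exact hρcard B h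
    · exact hρ'card B h
  · intro B hB
    rcases hcases B hB with h | h
    · exact hρI B h
    · exact hρ'I B h
  · -- ρt ≠ ρ
    intro h
    apply h1
    refine ⟨hne, fun B hB => ?_⟩
    obtain ⟨C, hC, hBC⟩ := key B (Finset.mem_union_right _ hB)
    exact ⟨C, h ▸ hC, hBC⟩
  · intro B hB
    exact key B (Finset.mem_union_left _ hB)
  · -- ρt ≠ ρ'
    intro h
    apply h2
    refine ⟨hne.symm, fun B hB => ?_⟩
    obtain ⟨C, hC, hBC⟩ := key B (Finset.mem_union_left _ hB)
    exact ⟨C, h ▸ hC, hBC⟩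
  · intro B hB
    exact key B (Finset.mem_union_right _ hB)
end

section
/- If ρ₁ and ρ₂ are configurations on (I,J) with ρ₁ ≺ ρ₂, then, setting m(ρ) = |ρ| + |I ∖ ⋃ρ| and P(ρ) = J ∖ ⋃ρ, one has m(ρ₁) ≤ m(ρ₂), P(ρ₁) ⊆ P(ρ₂), and (m(ρ₁), P(ρ₁)) ≠ (m(ρ₂), P(ρ₂)). -/
/-- if `ρ₁ ≺ ρ₂` are configurations on `(I, J)`, then, with
`m(ρ) = |ρ| + |I \ ⋃ρ|` and `P(ρ) = J \ ⋃ρ`, one has `m(ρ₁) ≤ m(ρ₂)`,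
`P(ρ₁) ⊆ P(ρ₂)`, and `(m(ρ₁), P(ρ₁)) ≠ (m(ρ₂), P(ρ₂))`. -/
theorem stmt_5 {α : Type*} [DecidableEq α] (I J : Finset α)
    (hIJ : Disjoint I J) (hI : I.Nonempty)
    (ρ₁ ρ₂ : Finset (Finset α))
    (h₁ : IsConfig I J ρ₁) (h₂ : IsConfig I J ρ₂)
    (hlt : ConfigLT ρ₁ ρ₂) :
    ρ₁.card + (I \ ρ₁.sup id).card ≤ ρ₂.card + (I \ ρ₂.sup id).card ∧
    J \ ρ₁.sup id ⊆ J \ ρ₂.sup id ∧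
    (ρ₁.card + (I \ ρ₁.sup id).card, J \ ρ₁.sup id) ≠
      (ρ₂.card + (I \ ρ₂.sup id).card, J \ ρ₂.sup id) := by
  classical
  obtain ⟨hne₁, hsub₁, hdisj₁, hcard₁, hI₁⟩ := h₁
  obtain ⟨hne₂, hsub₂, hdisj₂, hcard₂, hI₂⟩ := h₂
  -- choose a superblock for each block of ρ₂
  have hex : ∀ B : Finset α, ∃ B', B ∈ ρ₂ → B' ∈ ρ₁ ∧ B ⊆ B' := by
    intro B
    by_cases h : B ∈ ρ₂
    · obtain ⟨B', hB', hs⟩ := hlt.2 B h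
      exact ⟨B', fun _ => ⟨hB', hs⟩⟩
    · exact ⟨∅, fun h' => absurd h' h⟩
  choose ψ hψ using hex
  have hψmem : ∀ B ∈ ρ₂, ψ B ∈ ρ₁ := fun B hB => (hψ B hB).1
  have hψsub : ∀ B ∈ ρ₂, B ⊆ ψ B := fun B hB => (hψ B hB).2
  have huniq : ∀ B₂ ∈ ρ₂, ∀ B₁ ∈ ρ₁, ∀ x, x ∈ B₂ → x ∈ B₁ → ψ B₂ = B₁ := by
    intro B₂ hB₂ B₁ hB₁ x hx₂ hx₁
    by_contra hne
    exact Finset.disjoint_left.mp (hdisj₁ (ψ B₂) (hψmem B₂ hB₂) B₁ hB₁ hne)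
      (hψsub B₂ hB₂ hx₂) hx₁
  -- unions
  have hU : ρ₂.sup id ⊆ ρ₁.sup id := by
    intro x hx
    rw [Finset.mem_sup] at hx ⊢
    obtain ⟨B, hB, hxB⟩ := hx
    exact ⟨ψ B, hψmem B hB, hψsub B hB hxB⟩
  -- counting identity
  have key : ∀ (ρ : Finset (Finset α)), (∀ B ∈ ρ, ∀ B' ∈ ρ, B ≠ B' → Disjoint B B') →
      (I \ ρ.sup id).card + ∑ B ∈ ρ, (B ∩ I).card = I.card := by
    intro ρ hd
    have h1 : ∑ B ∈ ρ, (B ∩ I).card = (ρ.biUnion (· ∩ I)).card := by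
      rw [Finset.card_biUnion]
      intro B hB B' hB' hne
      exact Finset.disjoint_of_subset_left Finset.inter_subset_left
        (Finset.disjoint_of_subset_right Finset.inter_subset_left (hd B hB B' hB' hne))
    have h2 : ρ.biUnion (· ∩ I) = I ∩ ρ.sup id := by
      ext x
      simp only [Finset.mem_biUnion, Finset.mem_inter, Finset.mem_sup, id]
      tauto
    rw [h1, h2, Finset.inter_comm]
    rw [Finset.inter_comm]
    exact Finset.card_sdiff_add_card_inter I (ρ.sup id)
  -- fibers
  set F : Finset α → Finset (Finset α) := fun B₁ => ρ₂.filter fun B₂ => ψ B₂ = B₁ with hFdef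
  have fib : ∀ (f : Finset α → ℕ),
      ∑ B ∈ ρ₂, f B = ∑ B₁ ∈ ρ₁, ∑ B₂ ∈ F B₁, f B₂ :=
    fun f => (Finset.sum_fiberwise_of_maps_to hψmem f).symm
  have hFmem : ∀ B₁, ∀ B₂ ∈ F B₁, B₂ ∈ ρ₂ := fun B₁ B₂ h => (Finset.mem_filter.mp h).1
  have hFpsi : ∀ B₁, ∀ B₂ ∈ F B₁, ψ B₂ = B₁ := fun B₁ B₂ h => (Finset.mem_filter.mp h).2
  have hFsub : ∀ B₁, ∀ B₂ ∈ F B₁, B₂ ⊆ B₁ := by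
    intro B₁ B₂ h
    exact (hFpsi B₁ B₂ h) ▸ hψsub B₂ (hFmem B₁ B₂ h)
  have hFsum : ∀ B₁, ∑ B₂ ∈ F B₁, (B₂ ∩ I).card ≤ (B₁ ∩ I).card := by
    intro B₁
    have h1 : ∑ B₂ ∈ F B₁, (B₂ ∩ I).card = ((F B₁).biUnion (· ∩ I)).card := by
      rw [Finset.card_biUnion]
      intro B hB B' hB' hne
      exact Finset.disjoint_of_subset_left Finset.inter_subset_left
        (Finset.disjoint_of_subset_right Finset.inter_subset_left
          (hdisj₂ B (hFmem B₁ B hB) B' (hFmem B₁ B' hB') hne))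
    rw [h1]
    apply Finset.card_le_card
    intro x hx
    rw [Finset.mem_biUnion] at hx
    obtain ⟨B₂, hB₂, hx⟩ := hx
    rw [Finset.mem_inter] at hx ⊢
    exact ⟨hFsub B₁ B₂ hB₂ hx.1, hx.2⟩
  -- pointwise fiber inequality
  have G1' : ∀ B₁ ∈ ρ₁, 1 + ∑ B₂ ∈ F B₁, (B₂ ∩ I).card ≤ (F B₁).card + (B₁ ∩ I).card := by
    intro B₁ hB₁
    rcases (F B₁).eq_empty_or_nonempty with hF | hF
    · rw [hF]
      simp only [Finset.sum_empty, Finset.card_empty, add_zero, zero_add]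
      exact Nat.one_le_iff_ne_zero.mpr (Finset.card_ne_zero_of_mem (hI₁ B₁ hB₁).choose_spec)
    · have h1 := hFsum B₁
      have h2 := Finset.card_pos.mpr hF
      omega
  have eqL : ∀ (f : Finset α → ℕ),
      ρ₁.card + ∑ B ∈ ρ₂, f B = ∑ B₁ ∈ ρ₁, (1 + ∑ B₂ ∈ F B₁, f B₂) := by
    intro f
    rw [Finset.sum_add_distrib, fib f, Finset.card_eq_sum_ones]
  have eqR : ∀ (g : Finset α → ℕ),
      ρ₂.card + ∑ B ∈ ρ₁, g B = ∑ B₁ ∈ ρ₁, ((F B₁).card + g B₁) := by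
    intro g
    rw [Finset.sum_add_distrib]
    congr 1
    rw [Finset.card_eq_sum_ones, fib (fun _ => 1)]
    exact Finset.sum_congr rfl fun B₁ _ => (Finset.card_eq_sum_ones _).symm
  have G1 : ρ₁.card + ∑ B ∈ ρ₂, (B ∩ I).card ≤ ρ₂.card + ∑ B ∈ ρ₁, (B ∩ I).card := by
    rw [eqL (fun B => (B ∩ I).card), eqR (fun B => (B ∩ I).card)]
    exact Finset.sum_le_sum G1'
  have e₁ := key ρ₁ hdisj₁
  have e₂ := key ρ₂ hdisj₂
  refine ⟨by omega, Finset.sdiff_subset_sdiff (Finset.Subset.refl J) hU, ?_⟩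
  -- equality case
  intro heq
  rw [Prod.mk.injEq] at heq
  obtain ⟨hm, hP⟩ := heq
  have hJU : ∀ x ∈ J, x ∈ ρ₁.sup id → x ∈ ρ₂.sup id := by
    intro x hxJ hxU
    by_contra hxU₂
    have : x ∈ J \ ρ₂.sup id := Finset.mem_sdiff.mpr ⟨hxJ, hxU₂⟩
    rw [← hP, Finset.mem_sdiff] at this
    exact this.2 hxU
  have hG : ρ₁.card + ∑ B ∈ ρ₂, (B ∩ I).card = ρ₂.card + ∑ B ∈ ρ₁, (B ∩ I).card := by omega
  rw [eqL (fun B => (B ∩ I).card), eqR (fun B => (B ∩ I).card)] at hG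
  have hpt := (Finset.sum_eq_sum_iff_of_le G1').mp hG
  have main : ∀ B₁ ∈ ρ₁, F B₁ = {B₁} ∧ B₁ ∈ ρ₂ := by
    intro B₁ hB₁
    have hpt₁ := hpt B₁ hB₁
    have hFne : (F B₁).Nonempty := by
      by_contra hFe
      rw [Finset.not_nonempty_iff_eq_empty] at hFe
      have hBU : ∀ x ∈ B₁, x ∉ ρ₂.sup id := by
        intro x hx hxU
        rw [Finset.mem_sup] at hxU
        obtain ⟨B₂, hB₂, hxB₂⟩ := hxU
        have : B₂ ∈ F B₁ :=
          Finset.mem_filter.mpr ⟨hB₂, huniq B₂ hB₂ B₁ hB₁ x hxB₂ hx⟩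
        rw [hFe] at this
        exact absurd this (Finset.notMem_empty B₂)
      have hBI : B₁ ⊆ I := by
        intro x hx
        rcases Finset.mem_union.mp (hsub₁ B₁ hB₁ hx) with h | h
        · exact h
        · exact absurd (hJU x h (Finset.mem_sup.mpr ⟨B₁, hB₁, hx⟩)) (hBU x hx)
      have hBeq : B₁ ∩ I = B₁ := Finset.inter_eq_left.mpr hBI
      rw [hFe] at hpt₁
      simp only [Finset.sum_empty, Finset.card_empty, add_zero, zero_add] at hpt₁
      have := hcard₁ B₁ hB₁
      rw [hBeq] at hpt₁
      omega
    have hF1 : (F B₁).card = 1 ∧ ∑ B₂ ∈ F B₁, (B₂ ∩ I).card = (B₁ ∩ I).card := by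
      have h1 := hFsum B₁
      have h2 := Finset.card_pos.mpr hFne
      omega
    obtain ⟨B₂, hFB₂⟩ := Finset.card_eq_one.mp hF1.1
    have hB₂F : B₂ ∈ F B₁ := by rw [hFB₂]; exact Finset.mem_singleton_self B₂
    have hB₂mem : B₂ ∈ ρ₂ := hFmem B₁ B₂ hB₂F
    have hsumeq : (B₂ ∩ I).card = (B₁ ∩ I).card := by
      have := hF1.2
      rw [hFB₂, Finset.sum_singleton] at this
      exact this
    have hII : B₂ ∩ I = B₁ ∩ I :=
      Finset.eq_of_subset_of_card_le
        (Finset.inter_subset_inter (hFsub B₁ B₂ hB₂F) (Finset.Subset.refl I))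
        (le_of_eq hsumeq.symm)
    have hB12 : B₁ ⊆ B₂ := by
      intro x hx
      rcases Finset.mem_union.mp (hsub₁ B₁ hB₁ hx) with h | h
      · have hxi : x ∈ B₁ ∩ I := Finset.mem_inter.mpr ⟨hx, h⟩
        rw [← hII] at hxi
        exact (Finset.mem_inter.mp hxi).1
      · have hxU₂ := hJU x h (Finset.mem_sup.mpr ⟨B₁, hB₁, hx⟩)
        obtain ⟨B₂', hB₂', hxB₂'⟩ := Finset.mem_sup.mp hxU₂
        have hψ' : ψ B₂' = B₁ := huniq B₂' hB₂' B₁ hB₁ x hxB₂' hx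
        have : B₂' ∈ F B₁ := Finset.mem_filter.mpr ⟨hB₂', hψ'⟩
        rw [hFB₂, Finset.mem_singleton] at this
        rw [← this]
        exact hxB₂'
    have hEq : B₁ = B₂ := Finset.Subset.antisymm hB12 (hFsub B₁ B₂ hB₂F)
    exact ⟨by rw [hFB₂, hEq], hEq ▸ hB₂mem⟩
  have hsub : ρ₁ ⊆ ρ₂ := fun B₁ hB₁ => (main B₁ hB₁).2
  have hcards : ρ₂.card ≤ ρ₁.card := by
    have h1 : ρ₂.card = ∑ B₁ ∈ ρ₁, (F B₁).card := by
      rw [Finset.card_eq_sum_ones, fib (fun _ => 1)]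
      exact Finset.sum_congr rfl fun B₁ _ => (Finset.card_eq_sum_ones _).symm
    have h2 : ∑ B₁ ∈ ρ₁, (F B₁).card = ∑ B₁ ∈ ρ₁, 1 :=
      Finset.sum_congr rfl fun B₁ hB₁ => by rw [(main B₁ hB₁).1, Finset.card_singleton]
    rw [h1, h2, ← Finset.card_eq_sum_ones]
  exact hlt.1 (Finset.eq_of_subset_of_card_le hsub hcards)
end
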